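/- Let w : Δ → [0,∞) be continuously differentiable with sup w ≤ C, and let Z(t) be the counting process with last-arrival-time dependent intensity w, i.e. with arrival times τ₀ = 0 < τ₁ < τ₂ < ⋯ satisfying P(t < τ_k | F_{τ_{k−1}}) = exp(−∫_{τ_{k−1}}^t w(τ_{k−1},u) du) for t ≥ τ_{k−1}, and Z(t) = max{k : τ_k ≤ t}. Then for all 0 ≤ s ≤ t ≤ T: E[Z(t) − Z(s)] ≤ C·(t − s). -/

import Mathlib

open MeasureTheory

def Tri (T : ℝ) : Set (ℝ × ℝ) := {p | 0 ≤ p.1 ∧ p.1 ≤ p.2 ∧ p.2 ≤ T}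

namespace CPB

open Set

theorem measurable_indicator_of_continuousOn {α : Type*} [MeasurableSpace α]
    [TopologicalSpace α] [OpensMeasurableSpace α]
    {f : α → ℝ} {s : Set α} (hf : ContinuousOn f s) (hs : MeasurableSet s) :
    Measurable (s.indicator f) := by
  have h1 : Measurable (fun x : s => f x) :=
    (continuousOn_iff_continuous_restrict.mp hf).measurable
  have h2 := (MeasurableEmbedding.subtype_coe hs).measurable_extend h1
    (measurable_const (a := (0:ℝ)))
  have h3 : s.indicator f = Function.extend Subtype.val (fun x : s => f x) (fun _ => 0) := by
    funext a
    by_cases ha : a ∈ s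
    · rw [Set.indicator_of_mem ha]
      have : a = Subtype.val (⟨a, ha⟩ : s) := rfl
      rw [this, Subtype.val_injective.extend_apply]
    · rw [Set.indicator_of_notMem ha, Function.extend_apply']
      rintro ⟨b, rfl⟩; exact ha b.2
  rw [h3]; exact h2

theorem isClosed_Tri (T : ℝ) : IsClosed (Tri T) := by
  have h : Tri T = {p : ℝ × ℝ | 0 ≤ p.1} ∩ ({p | p.1 ≤ p.2} ∩ {p | p.2 ≤ T}) := rfl
  rw [h]
  exact (isClosed_le continuous_const continuous_fst).inter
    ((isClosed_le continuous_fst continuous_snd).inter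
      (isClosed_le continuous_snd continuous_const))

noncomputable def Wf (T : ℝ) (w : ℝ → ℝ → ℝ) (r v : ℝ) : ℝ :=
  (Tri T).indicator (fun p => w p.1 p.2) (r, max r (min v T))

variable {T C : ℝ} {w : ℝ → ℝ → ℝ}

theorem Wf_nonneg (hw0 : ∀ p ∈ Tri T, 0 ≤ w p.1 p.2) (r v : ℝ) : 0 ≤ Wf T w r v := by
  unfold Wf
  by_cases h : (r, max r (min v T)) ∈ Tri T
  · rw [indicator_of_mem h]; exact hw0 _ h
  · rw [indicator_of_notMem h]

theorem Wf_le (hC : 0 ≤ C) (hwbdd : ∀ p ∈ Tri T, w p.1 p.2 ≤ C) (r v : ℝ) :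
    Wf T w r v ≤ C := by
  unfold Wf
  by_cases h : (r, max r (min v T)) ∈ Tri T
  · rw [indicator_of_mem h]; exact hwbdd _ h
  · rw [indicator_of_notMem h]; exact hC

theorem Wf_eq {r v : ℝ} (hr : 0 ≤ r) (hrv : r ≤ v) (hvT : v ≤ T) : Wf T w r v = w r v := by
  have h1 : max r (min v T) = v := by rw [min_eq_left hvT, max_eq_right hrv]
  have hm : ((r, v) : ℝ × ℝ) ∈ Tri T := ⟨hr, hrv, hvT⟩
  simp only [Wf, h1, Set.indicator_of_mem hm]

theorem Wf_cont (hwC1 : ContDiffOn ℝ 1 (fun p : ℝ × ℝ => w p.1 p.2) (Tri T))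
    {r : ℝ} (hr : 0 ≤ r) (hrT : r ≤ T) : Continuous (fun v => Wf T w r v) := by
  have hmem : ∀ v : ℝ, (r, max r (min v T)) ∈ Tri T := fun v =>
    ⟨hr, le_max_left _ _, max_le hrT (min_le_right _ _)⟩
  have h1 : Continuous (fun v : ℝ => (r, max r (min v T))) :=
    continuous_const.prodMk (continuous_const.max (continuous_id.min continuous_const))
  have h2 : Continuous ((fun p : ℝ × ℝ => w p.1 p.2) ∘ fun v : ℝ => (r, max r (min v T))) :=
    hwC1.continuousOn.comp_continuous h1 hmem
  have h3 : (fun v => Wf T w r v)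
      = (fun p : ℝ × ℝ => w p.1 p.2) ∘ fun v : ℝ => (r, max r (min v T)) :=
    funext fun v => indicator_of_mem (hmem v) _
  rw [h3]; exact h2

theorem measurable_Wf (hwC1 : ContDiffOn ℝ 1 (fun p : ℝ × ℝ => w p.1 p.2) (Tri T)) :
    Measurable (fun p : ℝ × ℝ => Wf T w p.1 p.2) := by
  have h1 : Measurable ((Tri T).indicator (fun p : ℝ × ℝ => w p.1 p.2)) :=
    measurable_indicator_of_continuousOn hwC1.continuousOn (isClosed_Tri T).measurableSet
  have h2 : Continuous (fun p : ℝ × ℝ => (p.1, max p.1 (min p.2 T))) :=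
    continuous_fst.prodMk (continuous_fst.max (continuous_snd.min continuous_const))
  exact h1.comp h2.measurable

noncomputable def Og (T : ℝ) (w : ℝ → ℝ → ℝ) (r u : ℝ) : ℝ := ∫ v in r..u, Wf T w r v

theorem Og_hasDeriv (hwC1 : ContDiffOn ℝ 1 (fun p : ℝ × ℝ => w p.1 p.2) (Tri T))
    {r : ℝ} (hr : 0 ≤ r) (hrT : r ≤ T) (x : ℝ) :
    HasDerivAt (fun u => Og T w r u) (Wf T w r x) x := by
  have hc := Wf_cont hwC1 hr hrT
  exact intervalIntegral.integral_hasDerivAt_right (hc.intervalIntegrable _ _)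
    (hc.stronglyMeasurableAtFilter _ _) hc.continuousAt

theorem Og_nonneg (hw0 : ∀ p ∈ Tri T, 0 ≤ w p.1 p.2) {r u : ℝ} (hru : r ≤ u) :
    0 ≤ Og T w r u :=
  intervalIntegral.integral_nonneg hru fun v _ => Wf_nonneg hw0 r v

theorem Og_eq {r u : ℝ} (hr : 0 ≤ r) (hru : r ≤ u) (huT : u ≤ T) :
    Og T w r u = ∫ v in r..u, w r v := by
  refine intervalIntegral.integral_congr fun v hv => ?_
  rw [uIcc_of_le hru] at hv
  exact Wf_eq hr hv.1 (hv.2.trans huT)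

noncomputable def Ef (T : ℝ) (w : ℝ → ℝ → ℝ) (r u : ℝ) : ℝ := Real.exp (-(Og T w r u))

theorem key_calc (hC : 0 ≤ C) (hw0 : ∀ p ∈ Tri T, 0 ≤ w p.1 p.2)
    (hwC1 : ContDiffOn ℝ 1 (fun p : ℝ × ℝ => w p.1 p.2) (Tri T))
    (hwbdd : ∀ p ∈ Tri T, w p.1 p.2 ≤ C)
    {r a b : ℝ} (hr : 0 ≤ r) (hrT : r ≤ T) (hab : a ≤ b) :
    Ef T w r a - Ef T w r b ≤ C * ∫ u in a..b, Ef T w r u := by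
  have hOgc : Continuous (fun u => Og T w r u) :=
    continuous_iff_continuousAt.2 fun x => (Og_hasDeriv hwC1 hr hrT x).continuousAt
  have hcont : Continuous (fun u => Ef T w r u) := Real.continuous_exp.comp hOgc.neg
  have hderiv : ∀ x ∈ uIcc a b,
      HasDerivAt (fun u => Ef T w r u) (Ef T w r x * -(Wf T w r x)) x := fun x _ =>
    ((Og_hasDeriv hwC1 hr hrT x).neg).exp
  have hint : IntervalIntegrable (fun x => Ef T w r x * -(Wf T w r x)) volume a b :=
    (hcont.mul (Wf_cont hwC1 hr hrT).neg).intervalIntegrable _ _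
  have heq := intervalIntegral.integral_eq_sub_of_hasDerivAt hderiv hint
  have hmono : ∫ x in a..b, -(Ef T w r x * -(Wf T w r x))
      ≤ ∫ x in a..b, C * Ef T w r x := by
    refine intervalIntegral.integral_mono_on hab hint.neg
      ((continuous_const.mul hcont).intervalIntegrable _ _) fun x _ => ?_
    have h1 : 0 < Ef T w r x := Real.exp_pos _
    have h2 := Wf_le hC hwbdd r x
    have h3 := Wf_nonneg hw0 r x
    nlinarith
  calc Ef T w r a - Ef T w r b
      = ∫ x in a..b, -(Ef T w r x * -(Wf T w r x)) := by
        rw [intervalIntegral.integral_neg, heq]; ring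
    _ ≤ ∫ x in a..b, C * Ef T w r x := hmono
    _ = C * ∫ x in a..b, Ef T w r x := intervalIntegral.integral_const_mul _ _

noncomputable def Hf (T : ℝ) (w : ℝ → ℝ → ℝ) (r u : ℝ) : ℝ :=
  if 0 ≤ r ∧ r ≤ u ∧ u ≤ T then Real.exp (-(Og T w r u)) else 0

theorem Hf_nonneg (r u : ℝ) : 0 ≤ Hf T w r u := by
  unfold Hf; split
  · exact (Real.exp_pos _).le
  · exact le_refl 0

theorem Hf_le_one (hw0 : ∀ p ∈ Tri T, 0 ≤ w p.1 p.2) (r u : ℝ) : Hf T w r u ≤ 1 := by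
  unfold Hf; split
  · rename_i h
    rw [Real.exp_le_one_iff]
    simpa using Og_nonneg hw0 h.2.1
  · exact zero_le_one

theorem measurable_Og2 (hwC1 : ContDiffOn ℝ 1 (fun p : ℝ × ℝ => w p.1 p.2) (Tri T)) :
    Measurable (fun p : ℝ × ℝ => Og T w p.1 p.2) := by
  have hWm : Measurable (fun p : ℝ × ℝ => Wf T w p.1 p.2) := measurable_Wf hwC1
  have key : ∀ (mk : (ℝ × ℝ) → ℝ) (mk2 : (ℝ × ℝ) → ℝ), Measurable mk → Measurable mk2 →
      Measurable (fun p : ℝ × ℝ => ∫ v in Set.Ioc (mk p) (mk2 p), Wf T w p.1 v) := by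
    intro mk mk2 hmk hmk2
    have hFm : Measurable (fun x : (ℝ × ℝ) × ℝ =>
        (Set.Ioc (mk x.1) (mk2 x.1)).indicator (fun v => Wf T w x.1.1 v) x.2) := by
      have h1 : Measurable (fun x : (ℝ × ℝ) × ℝ => Wf T w x.1.1 x.2) :=
        hWm.comp (measurable_fst.fst.prodMk measurable_snd)
      have heq : (fun x : (ℝ × ℝ) × ℝ =>
          (Set.Ioc (mk x.1) (mk2 x.1)).indicator (fun v => Wf T w x.1.1 v) x.2)
          = fun x => if mk x.1 < x.2 ∧ x.2 ≤ mk2 x.1 then Wf T w x.1.1 x.2 else 0 := by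
        funext x
        rw [Set.indicator_apply]
        simp [Set.mem_Ioc]
      rw [heq]
      exact Measurable.ite
        (((measurableSet_lt (hmk.comp measurable_fst) measurable_snd)).inter
          (measurableSet_le measurable_snd (hmk2.comp measurable_fst))) h1 measurable_const
    have hsm := (hFm.stronglyMeasurable.integral_prod_right' (ν := volume)).measurable
    have heq2 : (fun p : ℝ × ℝ => ∫ v in Set.Ioc (mk p) (mk2 p), Wf T w p.1 v)
        = fun p : ℝ × ℝ => ∫ v, (Set.Ioc (mk p) (mk2 p)).indicator (fun v => Wf T w p.1 v) v := by
      funext p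
      exact (integral_indicator measurableSet_Ioc).symm
    rw [heq2]
    exact hsm
  have h1 : (fun p : ℝ × ℝ => Og T w p.1 p.2)
      = fun p : ℝ × ℝ => (∫ v in Set.Ioc p.1 p.2, Wf T w p.1 v)
        - ∫ v in Set.Ioc p.2 p.1, Wf T w p.1 v := by
    funext p
    rfl
  rw [h1]
  exact (key _ _ measurable_fst measurable_snd).sub (key _ _ measurable_snd measurable_fst)

theorem measurable_Hf (hwC1 : ContDiffOn ℝ 1 (fun p : ℝ × ℝ => w p.1 p.2) (Tri T)) :
    Measurable (fun p : ℝ × ℝ => Hf T w p.1 p.2) := by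
  unfold Hf
  refine Measurable.ite ?_ ?_ measurable_const
  · exact (isClosed_Tri T).measurableSet
  · exact Real.measurable_exp.comp (measurable_Og2 hwC1).neg

theorem Hf_eq {r u : ℝ} (hr : 0 ≤ r) (hru : r ≤ u) (huT : u ≤ T) :
    Hf T w r u = Ef T w r u := if_pos ⟨hr, hru, huT⟩

theorem Hf_zero {r u : ℝ} (h : ¬ r ≤ u) : Hf T w r u = 0 :=
  if_neg fun hc => h hc.2.1

end CPB

open CPB ENNReal NNReal

/-- Lipschitz bound on the expected increment of a counting process with
last-arrival-time dependent intensity. -/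
theorem counting_process_expected_increment_bound
    {Ω : Type*} {mΩ : MeasurableSpace Ω} (μ : Measure Ω) [IsProbabilityMeasure μ]
    (F : Filtration ℝ mΩ) (T C : ℝ) (hT : 0 < T) (hC : 0 ≤ C)
    (w : ℝ → ℝ → ℝ)
    (hw0 : ∀ p ∈ Tri T, 0 ≤ w p.1 p.2)
    (hwC1 : ContDiffOn ℝ 1 (fun p : ℝ × ℝ => w p.1 p.2) (Tri T))
    (hwbdd : ∀ p ∈ Tri T, w p.1 p.2 ≤ C)
    (τ : ℕ → Ω → ℝ)
    (hτ0 : ∀ ω, τ 0 ω = 0)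
    (hτmono : ∀ ω k, τ k ω < τ (k + 1) ω)
    (hst : ∀ k, IsStoppingTime F (fun ω => (τ k ω : WithTop ℝ)))
    (hcond : ∀ (k : ℕ) (t : ℝ), 1 ≤ k → t ∈ Set.Icc (0 : ℝ) T →
      ∀ᵐ ω ∂μ, τ (k - 1) ω ≤ t →
        (μ[Set.indicator {ω' | t < τ k ω'} (fun _ => (1 : ℝ)) |
            (hst (k - 1)).measurableSpace]) ω =
          Real.exp (-∫ u in (τ (k - 1) ω)..t, w (τ (k - 1) ω) u))
    (Z : ℝ → Ω → ℕ)
    (hZ : ∀ t ω, Z t ω = sSup {k | τ k ω ≤ t})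
    (hint : ∀ t ∈ Set.Icc (0 : ℝ) T, Integrable (fun ω => (Z t ω : ℝ)) μ) :
    ∀ s t : ℝ, 0 ≤ s → s ≤ t → t ≤ T →
      (∫ ω, (Z t ω : ℝ) ∂μ) - ∫ ω, (Z s ω : ℝ) ∂μ ≤ C * (t - s) := by
  intro s t hs hst' htT
  have hts : s ≤ T := hst'.trans htT
  have h0t : (0:ℝ) ≤ t := hs.trans hst'
  have hG : ∀ k, (hst k).measurableSpace ≤ mΩ := fun k => (hst k).measurableSpace_le
  have hmτ : ∀ k, Measurable (τ k) := fun k => by simpa using ((hst k).measurable'.untopD 0)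
  have hτmono' : ∀ ω, Monotone fun k => τ k ω := fun ω =>
    monotone_nat_of_le_succ fun k => (hτmono ω k).le
  have hτnn : ∀ k ω, 0 ≤ τ k ω := fun k ω => by
    have h := hτmono' ω (Nat.zero_le k)
    simp only at h
    rw [hτ0 ω] at h; exact h
  set E : ℕ → Set Ω := fun k => τ (k + 1) ⁻¹' Set.Ioc s t with hE
  have measE : ∀ k, MeasurableSet (E k) := fun k => (hmτ (k+1)) measurableSet_Ioc
  set q : ℕ → ℝ → ℝ :=
    fun k u => (μ ({ω | τ k ω ≤ u} ∩ {ω | u < τ (k+1) ω})).toReal with hq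
  have step3 : ∀ k : ℕ, μ (E k) ≤ ENNReal.ofReal (C * ∫ u in Set.Ioc s t, q k u) := by
    intro k
    have hGk : (hst k).measurableSpace ≤ mΩ := hG k
    haveI hsf : SigmaFinite (μ.trim hGk) := by
      haveI := isFiniteMeasure_trim hGk (μ := μ)
      infer_instance
    have hmle : ∀ (j : ℕ) (u : ℝ), MeasurableSet {ω | τ j ω ≤ u} := fun j u =>
      (hmτ j) measurableSet_Iic
    have hmlt : ∀ (j : ℕ) (u : ℝ), MeasurableSet {ω | u < τ j ω} := fun j u =>
      (hmτ j) measurableSet_Ioi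
    have hc : ∀ u : ℝ, 0 ≤ u → u ≤ T →
        ∀ᵐ ω ∂μ, τ k ω ≤ u →
          (μ[Set.indicator {ω' | u < τ (k+1) ω'} (fun _ => (1:ℝ)) |
            (hst k).measurableSpace]) ω
          = Real.exp (-∫ v in (τ k ω)..u, w (τ k ω) v) := by
      intro u hu huT
      have h1 := hcond (k+1) u (Nat.le_add_left 1 k) ⟨hu, huT⟩
      simpa using h1
    have hHmeas : Measurable (fun p : ℝ × ℝ => Hf T w p.1 p.2) := measurable_Hf hwC1
    have hHint : ∀ u : ℝ, Integrable (fun ω => Hf T w (τ k ω) u) μ := by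
      intro u
      refine ⟨(hHmeas.comp ((hmτ k).prodMk measurable_const)).aestronglyMeasurable, ?_⟩
      apply HasFiniteIntegral.of_bounded (C := 1)
      refine Filter.Eventually.of_forall fun ω => ?_
      simp only [Real.norm_eq_abs]; rw [abs_of_nonneg (Hf_nonneg _ _)]
      exact Hf_le_one hw0 _ _
    have stepA : ∀ u : ℝ, 0 ≤ u → u ≤ T → ∀ A : Set Ω,
        MeasurableSet[(hst k).measurableSpace] A → (∀ ω ∈ A, τ k ω ≤ u) →
        ∫ ω in A, Hf T w (τ k ω) u ∂μ = (μ (A ∩ {ω | u < τ (k+1) ω})).toReal := by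
      intro u hu huT A hA hAle
      have hindint : Integrable (Set.indicator {ω' | u < τ (k+1) ω'} (fun _ => (1:ℝ))) μ :=
        (integrable_const (1:ℝ)).indicator (hmlt (k+1) u)
      have h1 : ∫ ω in A, Hf T w (τ k ω) u ∂μ
          = ∫ ω in A, (μ[Set.indicator {ω' | u < τ (k+1) ω'} (fun _ => (1:ℝ)) |
              (hst k).measurableSpace]) ω ∂μ := by
        refine setIntegral_congr_ae (hGk A hA) ?_
        filter_upwards [hc u hu huT] with ω hω hmem
        rw [hω (hAle ω hmem)]
        have h0σ : 0 ≤ τ k ω := hτnn k ω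
        have hσu : τ k ω ≤ u := hAle ω hmem
        rw [Hf_eq h0σ hσu huT]
        show Real.exp (-(Og T w (τ k ω) u)) = _
        rw [Og_eq h0σ hσu huT]
      rw [h1, setIntegral_condExp hGk hindint hA,
        setIntegral_indicator (hmlt (k+1) u), setIntegral_const, smul_eq_mul, mul_one, measureReal_def]
    haveI hfinres : IsFiniteMeasure (volume.restrict (Set.Ioc s t)) := ⟨by
      rw [Measure.restrict_apply_univ]; exact measure_Ioc_lt_top⟩
    have hHrow : ∀ (r a b : ℝ), IntegrableOn (fun u => Hf T w r u) (Set.Ioc a b) volume := by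
      intro r a b
      haveI : IsFiniteMeasure (volume.restrict (Set.Ioc a b)) := ⟨by
        rw [Measure.restrict_apply_univ]; exact measure_Ioc_lt_top⟩
      refine ⟨(hHmeas.comp (measurable_const.prodMk measurable_id)).aestronglyMeasurable, ?_⟩
      apply HasFiniteIntegral.of_bounded (C := 1)
      refine Filter.Eventually.of_forall fun u => ?_
      simp only [Real.norm_eq_abs]; rw [abs_of_nonneg (Hf_nonneg _ _)]
      exact Hf_le_one hw0 _ _
    set g1 : Ω → ℝ := fun ω => ∫ u in Set.Ioc s t, Hf T w (τ k ω) u with hg1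
    have hg1meas : Measurable g1 := by
      have h2 : StronglyMeasurable fun r : ℝ =>
          ∫ u, Hf T w r u ∂(volume.restrict (Set.Ioc s t)) :=
        (hHmeas.stronglyMeasurable).integral_prod_right'
      exact h2.measurable.comp (hmτ k)
    have hg1nonneg : ∀ ω, 0 ≤ g1 ω := fun ω =>
      setIntegral_nonneg measurableSet_Ioc fun u _ => Hf_nonneg _ _
    have hconst1 : ∫ u in Set.Ioc s t, (1:ℝ) = t - s := by
      rw [setIntegral_const]
      simp [Real.volume_Ioc, ENNReal.toReal_ofReal (sub_nonneg.2 hst'), hst']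
    have hg1le : ∀ ω, g1 ω ≤ t - s := by
      intro ω
      calc g1 ω ≤ ∫ u in Set.Ioc s t, (1:ℝ) := by
            apply setIntegral_mono_on (hHrow _ s t)
              (integrableOn_const measure_Ioc_lt_top.ne) measurableSet_Ioc
            exact fun u _ => Hf_le_one hw0 _ _
        _ = t - s := hconst1
    have hg1int : Integrable g1 μ := by
      refine ⟨hg1meas.aestronglyMeasurable, ?_⟩
      apply HasFiniteIntegral.of_bounded (C := t - s)
      refine Filter.Eventually.of_forall fun ω => ?_
      simp only [Real.norm_eq_abs]; rw [abs_of_nonneg (hg1nonneg ω)]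
      exact hg1le ω
    have hFub : ∫ ω, g1 ω ∂μ
        = ∫ u in Set.Ioc s t, (∫ ω, Hf T w (τ k ω) u ∂μ) ∂volume := by
      have hintprod : Integrable (Function.uncurry fun ω u => Hf T w (τ k ω) u)
          (μ.prod (volume.restrict (Set.Ioc s t))) := by
        refine ⟨(hHmeas.comp
          (((hmτ k).comp measurable_fst).prodMk measurable_snd)).aestronglyMeasurable, ?_⟩
        apply HasFiniteIntegral.of_bounded (C := 1)
        refine Filter.Eventually.of_forall fun x => ?_
        simp only [Function.uncurry, Real.norm_eq_abs]
        rw [abs_of_nonneg (Hf_nonneg _ _)]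
        exact Hf_le_one hw0 _ _
      exact integral_integral_swap hintprod
    have hinner : ∀ u ∈ Set.Ioc s t, (∫ ω, Hf T w (τ k ω) u ∂μ) = q k u := by
      intro u hu
      have hu0 : (0:ℝ) ≤ u := hs.trans hu.1.le
      have huT : u ≤ T := hu.2.trans htT
      have hAuG : MeasurableSet[(hst k).measurableSpace] {ω | τ k ω ≤ u} :=
        by simpa using (hst k).measurableSet_le' u
      have hsplit := integral_add_compl (hGk _ hAuG) (hHint u)
      have hz : ∫ ω in {ω | τ k ω ≤ u}ᶜ, Hf T w (τ k ω) u ∂μ = 0 := by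
        apply setIntegral_eq_zero_of_forall_eq_zero
        intro ω hω
        have hω' : ¬ τ k ω ≤ u := hω
        exact Hf_zero hω'
      have hA := stepA u hu0 huT {ω | τ k ω ≤ u} hAuG fun ω hω => hω
      rw [← hsplit, hz, add_zero, hA]
    -- decomposition
    set As : Set Ω := {ω | τ k ω ≤ s} with hAs
    set B : Set Ω := {ω | τ k ω ≤ t} \ As with hB
    have hAsG : MeasurableSet[(hst k).measurableSpace] As := by
      have h := (hst k).measurableSet_le' s
      simp only [WithTop.coe_le_coe] at h
      exact h
    have hBG : MeasurableSet[(hst k).measurableSpace] B :=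
      (by simpa using (hst k).measurableSet_le' t :
        MeasurableSet[(hst k).measurableSpace] {ω | τ k ω ≤ t}).diff hAsG
    have hAsm : MeasurableSet As := hGk _ hAsG
    have hBm : MeasurableSet B := hGk _ hBG
    set P1 : Set Ω := (As ∩ {ω | s < τ (k+1) ω}) \ (As ∩ {ω | t < τ (k+1) ω}) with hP1
    set P2 : Set Ω := B \ (B ∩ {ω | t < τ (k+1) ω}) with hP2
    have hEsplit : E k = P1 ∪ P2 := by
      ext ω
      constructor
      · intro hω
        have h1 : s < τ (k+1) ω := hω.1
        have h2 : τ (k+1) ω ≤ t := hω.2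
        by_cases hσ : τ k ω ≤ s
        · left
          exact ⟨⟨hσ, h1⟩, fun hmem => absurd h2 (not_le.2 hmem.2)⟩
        · right
          have hσt : τ k ω ≤ t := le_trans (hτmono ω k).le h2
          exact ⟨⟨hσt, hσ⟩, fun hmem => absurd h2 (not_le.2 hmem.2)⟩
      · intro hω
        rcases hω with h | h
        · have h1 : s < τ (k+1) ω := h.1.2
          have h2 : ¬ t < τ (k+1) ω := fun hlt => h.2 ⟨h.1.1, hlt⟩
          exact ⟨h1, not_lt.1 h2⟩
        · have hσs : ¬ τ k ω ≤ s := h.1.2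
          have h1 : s < τ (k+1) ω := lt_trans (not_le.1 hσs) (hτmono ω k)
          have h2 : ¬ t < τ (k+1) ω := fun hlt => h.2 ⟨h.1, hlt⟩
          exact ⟨h1, not_lt.1 h2⟩
    have hdisjP : Disjoint P1 P2 := by
      refine Set.disjoint_left.mpr fun ω h1 h2 => ?_
      exact h2.1.2 h1.1.1
    have hP1m : MeasurableSet P1 :=
      (hAsm.inter (hmlt (k+1) s)).diff (hAsm.inter (hmlt (k+1) t))
    have hP2m : MeasurableSet P2 := hBm.diff (hBm.inter (hmlt (k+1) t))
    have hμE : μ (E k) = μ P1 + μ P2 := by rw [hEsplit]; exact measure_union hdisjP hP2m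
    have hsub1 : (As ∩ {ω | t < τ (k+1) ω}) ⊆ (As ∩ {ω | s < τ (k+1) ω}) :=
      fun ω hω => ⟨hω.1, lt_of_le_of_lt hst' hω.2⟩
    have hm1 : (μ P1).toReal = (μ (As ∩ {ω | s < τ (k+1) ω})).toReal
        - (μ (As ∩ {ω | t < τ (k+1) ω})).toReal := by
      have h6 := measure_diff_add_inter (μ := μ) (t := As ∩ {ω | t < τ (k+1) ω})
        (As ∩ {ω | s < τ (k+1) ω}) (hAsm.inter (hmlt (k+1) t))
      rw [Set.inter_eq_right.mpr hsub1] at h6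
      have h7 := congrArg ENNReal.toReal h6
      rw [ENNReal.toReal_add (measure_ne_top μ _) (measure_ne_top μ _)] at h7
      linarith
    have hm2 : (μ P2).toReal = (μ B).toReal - (μ (B ∩ {ω | t < τ (k+1) ω})).toReal := by
      have h6 := measure_diff_add_inter (μ := μ) (t := B ∩ {ω | t < τ (k+1) ω})
        B (hBm.inter (hmlt (k+1) t))
      rw [Set.inter_eq_right.mpr Set.inter_subset_left] at h6
      have h7 := congrArg ENNReal.toReal h6
      rw [ENNReal.toReal_add (measure_ne_top μ _) (measure_ne_top μ _)] at h7
      linarith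
    have hAs_s := stepA s hs hts As hAsG fun ω hω => hω
    have hAs_t := stepA t h0t htT As hAsG fun ω hω => le_trans hω hst'
    have hB_t := stepA t h0t htT B hBG fun ω hω => hω.1
    have hμB : (μ B).toReal = ∫ _ω in B, (1:ℝ) ∂μ := by
      rw [setIntegral_const, smul_eq_mul, mul_one, measureReal_def]
    -- pointwise bounds
    have hbound1 : ∀ ω ∈ As, Hf T w (τ k ω) s - Hf T w (τ k ω) t ≤ C * g1 ω := by
      intro ω hω
      have h0σ : 0 ≤ τ k ω := hτnn k ω
      have hσs : τ k ω ≤ s := hω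
      have hHs : Hf T w (τ k ω) s = Ef T w (τ k ω) s := Hf_eq h0σ hσs hts
      have hHt : Hf T w (τ k ω) t = Ef T w (τ k ω) t := Hf_eq h0σ (hσs.trans hst') htT
      have hL2 := key_calc hC hw0 hwC1 hwbdd h0σ (hσs.trans hts) hst'
      have hEq : ∫ u in s..t, Ef T w (τ k ω) u = g1 ω := by
        rw [intervalIntegral.integral_of_le hst']
        refine setIntegral_congr_fun measurableSet_Ioc fun u hu => ?_
        exact (Hf_eq h0σ (hσs.trans hu.1.le) (hu.2.trans htT)).symm
      rw [hHs, hHt]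
      rw [hEq] at hL2
      exact hL2
    have hbound2 : ∀ ω ∈ B, 1 - Hf T w (τ k ω) t ≤ C * g1 ω := by
      intro ω hω
      have h0σ : 0 ≤ τ k ω := hτnn k ω
      have hσt : τ k ω ≤ t := hω.1
      have hσs : s < τ k ω := not_le.1 hω.2
      have hHt : Hf T w (τ k ω) t = Ef T w (τ k ω) t := Hf_eq h0σ hσt htT
      have hone : Ef T w (τ k ω) (τ k ω) = 1 := by
        show Real.exp (-(Og T w (τ k ω) (τ k ω))) = 1
        rw [show Og T w (τ k ω) (τ k ω) = 0 from intervalIntegral.integral_same]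
        simp
      have hL2 := key_calc hC hw0 hwC1 hwbdd h0σ (hσt.trans htT) hσt
      have hzero : ∫ u in Set.Ioc s (τ k ω), Hf T w (τ k ω) u = 0 := by
        rw [integral_Ioc_eq_integral_Ioo]
        apply setIntegral_eq_zero_of_forall_eq_zero
        intro u hu
        exact Hf_zero (not_le.2 hu.2)
      have hsplitI : g1 ω = ∫ u in Set.Ioc (τ k ω) t, Hf T w (τ k ω) u := by
        have h9 : g1 ω = ∫ u in Set.Ioc s (τ k ω) ∪ Set.Ioc (τ k ω) t,
            Hf T w (τ k ω) u := by
          rw [Set.Ioc_union_Ioc_eq_Ioc hσs.le hσt]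
        rw [h9, setIntegral_union (Set.Ioc_disjoint_Ioc_of_le le_rfl) measurableSet_Ioc
          (hHrow _ s (τ k ω)) (hHrow _ (τ k ω) t), hzero, zero_add]
      have hIoc : ∫ u in Set.Ioc (τ k ω) t, Hf T w (τ k ω) u
          = ∫ u in (τ k ω)..t, Ef T w (τ k ω) u := by
        rw [intervalIntegral.integral_of_le hσt]
        refine setIntegral_congr_fun measurableSet_Ioc fun u hu => ?_
        exact Hf_eq h0σ hu.1.le (hu.2.trans htT)
      rw [hHt, ← hone]
      rw [hsplitI, hIoc]
      exact hL2
    -- integral comparisons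
    have hintCg1 : Integrable (fun ω => C * g1 ω) μ := hg1int.const_mul C
    have hT1r : (μ P1).toReal ≤ C * ∫ ω in As, g1 ω ∂μ := by
      rw [hm1, ← hAs_s, ← hAs_t,
        ← integral_sub ((hHint s).integrableOn) ((hHint t).integrableOn)]
      calc ∫ ω in As, (Hf T w (τ k ω) s - Hf T w (τ k ω) t) ∂μ
          ≤ ∫ ω in As, C * g1 ω ∂μ := setIntegral_mono_on
            (((hHint s).sub (hHint t)).integrableOn) hintCg1.integrableOn hAsm hbound1
        _ = C * ∫ ω in As, g1 ω ∂μ := integral_const_mul C _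
    have hT2r : (μ P2).toReal ≤ C * ∫ ω in B, g1 ω ∂μ := by
      rw [hm2, hμB, ← hB_t,
        ← integral_sub ((integrable_const (1:ℝ)).integrableOn) ((hHint t).integrableOn)]
      calc ∫ ω in B, ((1:ℝ) - Hf T w (τ k ω) t) ∂μ
          ≤ ∫ ω in B, C * g1 ω ∂μ := setIntegral_mono_on
            (((integrable_const (1:ℝ)).sub (hHint t)).integrableOn)
            hintCg1.integrableOn hBm hbound2
        _ = C * ∫ ω in B, g1 ω ∂μ := integral_const_mul C _
    have hdisjAB : Disjoint As B := disjoint_sdiff_self_right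
    have hsum2 : (μ (E k)).toReal ≤ C * ∫ ω, g1 ω ∂μ := by
      have h8 : (μ (E k)).toReal = (μ P1).toReal + (μ P2).toReal := by
        rw [hμE, ENNReal.toReal_add (measure_ne_top μ _) (measure_ne_top μ _)]
      have h9 : ∫ ω in As, g1 ω ∂μ + ∫ ω in B, g1 ω ∂μ = ∫ ω in As ∪ B, g1 ω ∂μ :=
        (setIntegral_union hdisjAB hBm hg1int.integrableOn hg1int.integrableOn).symm
      have h10 : ∫ ω in As ∪ B, g1 ω ∂μ ≤ ∫ ω, g1 ω ∂μ :=
        setIntegral_le_integral hg1int (Filter.Eventually.of_forall hg1nonneg)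
      have h11 : C * ∫ ω in As ∪ B, g1 ω ∂μ ≤ C * ∫ ω, g1 ω ∂μ :=
        mul_le_mul_of_nonneg_left h10 hC
      rw [h8]
      calc (μ P1).toReal + (μ P2).toReal
          ≤ C * ∫ ω in As, g1 ω ∂μ + C * ∫ ω in B, g1 ω ∂μ := add_le_add hT1r hT2r
        _ = C * ∫ ω in As ∪ B, g1 ω ∂μ := by rw [← h9]; ring
        _ ≤ C * ∫ ω, g1 ω ∂μ := h11
    have h12 : (μ (E k)).toReal ≤ C * ∫ u in Set.Ioc s t, q k u := by
      have h13 : ∫ ω, g1 ω ∂μ = ∫ u in Set.Ioc s t, q k u := by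
        rw [hFub]
        exact setIntegral_congr_fun measurableSet_Ioc hinner
      rw [← h13]
      exact hsum2
    calc μ (E k) = ENNReal.ofReal ((μ (E k)).toReal) :=
        (ENNReal.ofReal_toReal (measure_ne_top μ _)).symm
      _ ≤ ENNReal.ofReal (C * ∫ u in Set.Ioc s t, q k u) := ENNReal.ofReal_le_ofReal h12
  have step1 : ∀ ω, ENNReal.ofReal ((Z t ω : ℝ) - (Z s ω : ℝ))
      ≤ ∑' k, (E k).indicator (fun _ => (1:ℝ≥0∞)) ω := by
    intro ω
    by_cases hbdd : BddAbove {k | τ k ω ≤ t}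
    · have hneT : {k | τ k ω ≤ t}.Nonempty := ⟨0, by simp [hτ0 ω, h0t]⟩
      have hSs : {k | τ k ω ≤ s} ⊆ {k | τ k ω ≤ t} := fun k hk => le_trans hk hst'
      have hbdds : BddAbove {k | τ k ω ≤ s} := hbdd.mono hSs
      rw [hZ t ω, hZ s ω]
      set n := sSup {k | τ k ω ≤ s} with hn
      set m := sSup {k | τ k ω ≤ t} with hm
      rcases le_or_gt m n with hmn | hnm
      · rw [ENNReal.ofReal_of_nonpos
          (sub_nonpos.2 (by exact_mod_cast Nat.cast_le.2 hmn))]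
        exact zero_le ..
      · have hmmem : m ∈ {k | τ k ω ≤ t} := Nat.sSup_mem hneT hbdd
        have hsum : ∀ k ∈ Finset.Ico n m, (E k).indicator (fun _ => (1:ℝ≥0∞)) ω = 1 := by
          intro k hk
          rw [Finset.mem_Ico] at hk
          have h8 : τ (k+1) ω ≤ t := le_trans (hτmono' ω (Nat.succ_le_of_lt hk.2)) hmmem
          have h9 : s < τ (k+1) ω := by
            by_contra h
            push_neg at h
            have : k + 1 ≤ n := le_csSup hbdds h
            omega
          exact Set.indicator_of_mem (Set.mem_preimage.mpr (Set.mem_Ioc.mpr ⟨h9, h8⟩)) _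
        calc ENNReal.ofReal ((m:ℝ) - (n:ℝ))
            = ((m - n : ℕ) : ℝ≥0∞) := by
              have hcast : (m:ℝ) - (n:ℝ) = ((m - n : ℕ) : ℝ) := by
                rw [Nat.cast_sub hnm.le]
              rw [hcast, ENNReal.ofReal_natCast]
          _ = ∑ k ∈ Finset.Ico n m, (E k).indicator (fun _ => (1:ℝ≥0∞)) ω := by
              rw [Finset.sum_congr rfl hsum]
              simp [Nat.card_Ico]
          _ ≤ ∑' k, (E k).indicator (fun _ => (1:ℝ≥0∞)) ω := ENNReal.sum_le_tsum _
    · have hZt0 : Z t ω = 0 := by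
        rw [hZ t ω, csSup_of_not_bddAbove hbdd, csSup_empty]
        rfl
      rw [hZt0]
      rw [ENNReal.ofReal_of_nonpos (by
        have := Nat.cast_nonneg (α := ℝ) (Z s ω)
        push_cast
        linarith)]
      exact zero_le ..
  have hmle : ∀ (j : ℕ) (u : ℝ), MeasurableSet {ω | τ j ω ≤ u} := fun j u =>
    (hmτ j) measurableSet_Iic
  have hmlt : ∀ (j : ℕ) (u : ℝ), MeasurableSet {ω | u < τ j ω} := fun j u =>
    (hmτ j) measurableSet_Ioi
  have hT1 : ∀ X : Set Ω, (μ X).toReal ≤ 1 := fun X => by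
    have h := ENNReal.toReal_mono (measure_ne_top μ Set.univ)
      (measure_mono (Set.subset_univ X))
    simpa [measure_univ] using h
  have hqmono : ∀ j : ℕ, Monotone (fun u => (μ {ω | τ j ω ≤ u}).toReal) := by
    intro j u1 u2 h12
    apply ENNReal.toReal_mono (measure_ne_top μ _)
    exact measure_mono fun ω hω => le_trans hω h12
  have hqeq : ∀ k u, q k u
      = (μ {ω | τ k ω ≤ u}).toReal - (μ {ω | τ (k+1) ω ≤ u}).toReal := by
    intro k u
    have hsub2 : {ω | τ (k+1) ω ≤ u} ⊆ {ω | τ k ω ≤ u} := fun ω hω =>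
      le_trans (hτmono' ω (Nat.le_succ k)) hω
    have hdiff : {ω | τ k ω ≤ u} ∩ {ω | u < τ (k+1) ω}
        = {ω | τ k ω ≤ u} \ {ω | τ (k+1) ω ≤ u} := by
      ext ω
      simp only [Set.mem_inter_iff, Set.mem_diff, Set.mem_setOf_eq, not_le]
    have h6 : μ ({ω | τ k ω ≤ u} \ {ω | τ (k+1) ω ≤ u}) + μ {ω | τ (k+1) ω ≤ u}
        = μ {ω | τ k ω ≤ u} := by
      have h7 := measure_diff_add_inter (μ := μ) (t := {ω | τ (k+1) ω ≤ u}) {ω | τ k ω ≤ u}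
        (hmle (k+1) u)
      rwa [Set.inter_eq_right.mpr hsub2] at h7
    have h7 := congrArg ENNReal.toReal h6
    rw [ENNReal.toReal_add (measure_ne_top μ _) (measure_ne_top μ _)] at h7
    simp only [hq]
    rw [hdiff]
    linarith
  have hqint : ∀ k : ℕ, IntegrableOn (q k) (Set.Ioc s t) volume := by
    intro k
    haveI hfinres : IsFiniteMeasure (volume.restrict (Set.Ioc s t)) := ⟨by
      rw [Measure.restrict_apply_univ]; exact measure_Ioc_lt_top⟩
    have hik : ∀ j : ℕ,
        IntegrableOn (fun u => (μ {ω | τ j ω ≤ u}).toReal) (Set.Ioc s t) volume := by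
      intro j
      refine ⟨((hqmono j).measurable).aestronglyMeasurable, ?_⟩
      apply HasFiniteIntegral.of_bounded (C := 1)
      refine Filter.Eventually.of_forall fun u => ?_
      simp only [Real.norm_eq_abs]; rw [abs_of_nonneg ENNReal.toReal_nonneg]
      exact hT1 _
    have h8 : q k = fun u =>
        (μ {ω | τ k ω ≤ u}).toReal - (μ {ω | τ (k+1) ω ≤ u}).toReal := funext (hqeq k)
    rw [h8]
    exact (hik k).sub (hik (k+1))
  have step4 : (∑' k, μ (E k)) ≤ ENNReal.ofReal (C * (t - s)) := by
    rw [ENNReal.tsum_eq_iSup_sum]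
    refine iSup_le fun Fs => ?_
    calc ∑ k ∈ Fs, μ (E k)
        ≤ ∑ k ∈ Fs, ENNReal.ofReal (C * ∫ u in Set.Ioc s t, q k u) :=
          Finset.sum_le_sum fun k _ => step3 k
      _ = ENNReal.ofReal (∑ k ∈ Fs, C * ∫ u in Set.Ioc s t, q k u) := by
          rw [ENNReal.ofReal_sum_of_nonneg]
          intro k _
          exact mul_nonneg hC (setIntegral_nonneg measurableSet_Ioc
            fun u _ => ENNReal.toReal_nonneg)
      _ ≤ ENNReal.ofReal (C * (t - s)) := by
          apply ENNReal.ofReal_le_ofReal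
          rw [← Finset.mul_sum]
          refine mul_le_mul_of_nonneg_left ?_ hC
          rw [← integral_finset_sum Fs (fun k _ => hqint k)]
          have hle : ∀ u ∈ Set.Ioc s t, (∑ k ∈ Fs, q k u) ≤ 1 := by
            intro u hu
            have hDm : ∀ j : ℕ,
                MeasurableSet ({ω | τ j ω ≤ u} ∩ {ω | u < τ (j+1) ω}) := fun j =>
              (hmle j u).inter (hmlt (j+1) u)
            have hd : Set.PairwiseDisjoint (↑Fs)
                (fun j => {ω | τ j ω ≤ u} ∩ {ω | u < τ (j+1) ω}) := by
              intro k1 _ k2 _ hne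
              rcases Nat.lt_or_ge k1 k2 with hlt | hge
              · refine Set.disjoint_left.mpr fun ω h1 h2 => ?_
                have h9 : τ (k1+1) ω ≤ τ k2 ω := hτmono' ω hlt
                exact absurd (le_trans h9 h2.1) (not_le.2 h1.2)
              · have hlt2 : k2 < k1 := lt_of_le_of_ne hge (Ne.symm hne)
                refine Set.disjoint_right.mpr fun ω h1 h2 => ?_
                have h9 : τ (k2+1) ω ≤ τ k1 ω := hτmono' ω hlt2
                exact absurd (le_trans h9 h2.1) (not_le.2 h1.2)
            have hkey : (∑ k ∈ Fs, μ ({ω | τ k ω ≤ u} ∩ {ω | u < τ (k+1) ω})) ≤ 1 := by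
              rw [← measure_biUnion_finset hd fun j _ => hDm j]
              exact prob_le_one
            have h10 : (∑ k ∈ Fs, q k u)
                = (∑ k ∈ Fs, μ ({ω | τ k ω ≤ u} ∩ {ω | u < τ (k+1) ω})).toReal := by
              rw [ENNReal.toReal_sum fun k _ => measure_ne_top μ _]
            rw [h10]
            have h11 := ENNReal.toReal_mono ENNReal.one_ne_top hkey
            simpa using h11
          calc ∫ u in Set.Ioc s t, (∑ k ∈ Fs, q k u)
              ≤ ∫ u in Set.Ioc s t, (1:ℝ) := by
                apply setIntegral_mono_on
                  (integrable_finset_sum Fs fun k _ => hqint k)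
                  (integrableOn_const measure_Ioc_lt_top.ne)
                  measurableSet_Ioc hle
            _ = t - s := by
                rw [setIntegral_const]
                simp [Real.volume_Ioc, ENNReal.toReal_ofReal (sub_nonneg.2 hst'), hst']
  -- final assembly
  have hZt := hint t ⟨h0t, htT⟩
  have hZs := hint s ⟨hs, hts⟩
  have hsub : (∫ ω, (Z t ω : ℝ) ∂μ) - ∫ ω, (Z s ω : ℝ) ∂μ
      = ∫ ω, ((Z t ω : ℝ) - (Z s ω : ℝ)) ∂μ := (integral_sub hZt hZs).symm
  set f : Ω → ℝ := fun ω => (Z t ω : ℝ) - (Z s ω : ℝ) with hf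
  have hfint : Integrable f μ := hZt.sub hZs
  have h2 : ∫ ω, f ω ∂μ ≤ ∫ ω, max (f ω) 0 ∂μ :=
    integral_mono hfint hfint.pos_part fun ω => le_max_left _ _
  have h3 : ∫ ω, max (f ω) 0 ∂μ = (∫⁻ ω, ENNReal.ofReal (f ω) ∂μ).toReal := by
    have hnn : (0 : Ω → ℝ) ≤ᵐ[μ] (fun ω => max (f ω) 0) :=
      Filter.Eventually.of_forall fun ω => le_max_right _ _
    rw [integral_eq_lintegral_of_nonneg_ae hnn hfint.pos_part.aestronglyMeasurable]
    congr 1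
    apply lintegral_congr
    intro ω
    rcases le_total (f ω) 0 with h | h
    · rw [max_eq_right h, ENNReal.ofReal_of_nonpos h, ENNReal.ofReal_zero]
    · rw [max_eq_left h]
  have h4 : (∫⁻ ω, ENNReal.ofReal (f ω) ∂μ) ≤ ∑' k, μ (E k) := by
    calc ∫⁻ ω, ENNReal.ofReal (f ω) ∂μ
        ≤ ∫⁻ ω, ∑' k, (E k).indicator (fun _ => (1:ℝ≥0∞)) ω ∂μ := lintegral_mono step1
      _ = ∑' k, ∫⁻ ω, (E k).indicator (fun _ => (1:ℝ≥0∞)) ω ∂μ :=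
          lintegral_tsum fun k => (measurable_const.indicator (measE k)).aemeasurable
      _ = ∑' k, μ (E k) := tsum_congr fun k => lintegral_indicator_one (measE k)
  have hfin : ENNReal.ofReal (C * (t - s)) ≠ ⊤ := ENNReal.ofReal_ne_top
  have h5 : (∫⁻ ω, ENNReal.ofReal (f ω) ∂μ).toReal ≤ C * (t - s) := by
    have h6 := ENNReal.toReal_mono hfin (le_trans h4 step4)
    rwa [ENNReal.toReal_ofReal (mul_nonneg hC (sub_nonneg.2 hst'))] at h6
  rw [hsub]
  calc ∫ ω, ((Z t ω : ℝ) - (Z s ω : ℝ)) ∂μ = ∫ ω, f ω ∂μ := rfl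
    _ ≤ ∫ ω, max (f ω) 0 ∂μ := h2
    _ = (∫⁻ ω, ENNReal.ofReal (f ω) ∂μ).toReal := h3
    _ ≤ C * (t - s) := h5
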